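/- Every Möbius automorphism m of the open unit disc induces a well-defined bijective self-map τ(m) of the symmetrised bidisc G by τ(m)(z+w, zw) = (m(z)+m(w), m(z)m(w)), and the assignment m ↦ τ(m) is an injective group homomorphism from Aut(𝔻) to the group of bijections of G. -/

import Mathlib

open Complex

/-- The symmetrised bidisc. -/
def symBidisc : Set (ℂ × ℂ) :=
  {x | ∃ z w : ℂ, ‖z‖ < 1 ∧ ‖w‖ < 1 ∧ x = (z + w, z * w)}

/-- Möbius automorphisms of the open unit disc. -/
def IsMobius (m : ℂ → ℂ) : Prop :=
  ∃ ω a : ℂ, ‖ω‖ = 1 ∧ ‖a‖ < 1 ∧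
    ∀ l : ℂ, ‖l‖ < 1 → m l = ω * (l - a) / (1 - (starRingEnd ℂ) a * l)

noncomputable def mob (ω a l : ℂ) : ℂ := ω * (l - a) / (1 - (starRingEnd ℂ) a * l)

lemma den_ne {a l : ℂ} (ha : ‖a‖ < 1) (hl : ‖l‖ < 1) :
    (1 : ℂ) - (starRingEnd ℂ) a * l ≠ 0 := by
  intro h
  have h1 : (1 : ℂ) = (starRingEnd ℂ) a * l := by linear_combination h
  have : ‖(starRingEnd ℂ) a * l‖ < 1 := by
    rw [norm_mul, RCLike.norm_conj]
    nlinarith [norm_nonneg a, norm_nonneg l]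
  rw [← h1] at this; simp at this

lemma normSq_lt_one {a : ℂ} (ha : ‖a‖ < 1) : Complex.normSq a < 1 := by
  rw [Complex.normSq_eq_norm_sq]
  nlinarith [norm_nonneg a]

lemma mob_norm_lt {ω a l : ℂ} (hω : ‖ω‖ = 1) (ha : ‖a‖ < 1) (hl : ‖l‖ < 1) :
    ‖mob ω a l‖ < 1 := by
  have hd := den_ne ha hl
  have key : ‖l - a‖ < ‖1 - (starRingEnd ℂ) a * l‖ := by
    have h2 : Complex.normSq (1 - (starRingEnd ℂ) a * l) - Complex.normSq (l - a)
        = (1 - Complex.normSq a) * (1 - Complex.normSq l) := by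
      have e1 := Complex.mul_conj (1 - (starRingEnd ℂ) a * l)
      have e2 := Complex.mul_conj (l - a)
      have e3 := Complex.mul_conj a
      have e4 := Complex.mul_conj l
      have hc : ((Complex.normSq (1 - (starRingEnd ℂ) a * l) : ℂ))
          - Complex.normSq (l - a) = (1 - Complex.normSq a) * (1 - Complex.normSq l) := by
        rw [← e1, ← e2]
        push_cast [← e3, ← e4]
        simp only [map_sub, map_mul, map_one, Complex.conj_conj]
        ring
      exact_mod_cast hc
    have hsq : Complex.normSq a < 1 := normSq_lt_one ha
    have hsq' : Complex.normSq l < 1 := normSq_lt_one hl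
    have hlt : Complex.normSq (l - a) < Complex.normSq (1 - (starRingEnd ℂ) a * l) := by
      nlinarith
    have := Real.sqrt_lt_sqrt (Complex.normSq_nonneg _) hlt
    rw [Complex.norm_def, Complex.norm_def]; exact this
  rw [mob, norm_div, norm_mul, hω, one_mul]
  rw [div_lt_one (norm_pos_iff.2 hd)]
  exact key

lemma mul_conj_one {ω : ℂ} (hω : ‖ω‖ = 1) : (starRingEnd ℂ) ω * ω = 1 := by
  have := Complex.mul_conj ω
  rw [Complex.normSq_eq_norm_sq] at this
  rw [mul_comm, this]
  simp [hω]

lemma mob_inv {ω a l : ℂ} (hω : ‖ω‖ = 1) (ha : ‖a‖ < 1) (hl : ‖l‖ < 1) :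
    mob ((starRingEnd ℂ) ω) (-(ω * a)) (mob ω a l) = l := by
  have hd : (1 : ℂ) - (starRingEnd ℂ) a * l ≠ 0 := den_ne ha hl
  have haa : (1 : ℂ) - (starRingEnd ℂ) a * a ≠ 0 := den_ne ha ha
  have hω' := mul_conj_one hω
  unfold mob
  rw [map_neg, map_mul]
  have hden : 1 - -((starRingEnd ℂ) ω * (starRingEnd ℂ) a) * (ω * (l - a) / (1 - (starRingEnd ℂ) a * l))
      = (1 - (starRingEnd ℂ) a * a) / (1 - (starRingEnd ℂ) a * l) := by
    field_simp
    linear_combination ((starRingEnd ℂ) a * (l - a)) * hω'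
  have hnum : (starRingEnd ℂ) ω * (ω * (l - a) / (1 - (starRingEnd ℂ) a * l) - -(ω * a))
      = l * (1 - (starRingEnd ℂ) a * a) / (1 - (starRingEnd ℂ) a * l) := by
    have hinv := mul_inv_cancel₀ hd
    linear_combination ((l - a) * (1 - (starRingEnd ℂ) a * l)⁻¹ + a) * hω' - a * hinv
  rw [hnum, hden]
  rw [div_div_div_cancel_right₀ hd, mul_div_assoc, div_self haa, mul_one]

lemma conj_omega_norm {ω : ℂ} (hω : ‖ω‖ = 1) : ‖(starRingEnd ℂ) ω‖ = 1 := by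
  rw [RCLike.norm_conj]; exact hω

lemma neg_omega_a_norm {ω a : ℂ} (hω : ‖ω‖ = 1) (ha : ‖a‖ < 1) : ‖-(ω * a)‖ < 1 := by
  rw [norm_neg, norm_mul, hω, one_mul]; exact ha

lemma mob_inv' {ω a l : ℂ} (hω : ‖ω‖ = 1) (ha : ‖a‖ < 1) (hl : ‖l‖ < 1) :
    mob ω a (mob ((starRingEnd ℂ) ω) (-(ω * a)) l) = l := by
  have h := mob_inv (conj_omega_norm hω) (neg_omega_a_norm hω ha) hl
  rwa [Complex.conj_conj,
    show -((starRingEnd ℂ) ω * -(ω * a)) = a from by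
      linear_combination a * (mul_conj_one hω)] at h

noncomputable def Fmap (ω a : ℂ) (x : ℂ × ℂ) : ℂ × ℂ :=
  (ω * (x.1 * (1 + a * (starRingEnd ℂ) a) - 2 * a - 2 * (starRingEnd ℂ) a * x.2)
      / (1 - (starRingEnd ℂ) a * x.1 + ((starRingEnd ℂ) a) ^ 2 * x.2),
   ω ^ 2 * (x.2 - a * x.1 + a ^ 2)
      / (1 - (starRingEnd ℂ) a * x.1 + ((starRingEnd ℂ) a) ^ 2 * x.2))

lemma Fmap_eq {ω a z w : ℂ} (ha : ‖a‖ < 1) (hz : ‖z‖ < 1) (hw : ‖w‖ < 1) :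
    Fmap ω a (z + w, z * w) = (mob ω a z + mob ω a w, mob ω a z * mob ω a w) := by
  have hdz := den_ne ha hz
  have hdw := den_ne ha hw
  have hD : (1 : ℂ) - (starRingEnd ℂ) a * (z + w) + ((starRingEnd ℂ) a) ^ 2 * (z * w)
      = (1 - (starRingEnd ℂ) a * z) * (1 - (starRingEnd ℂ) a * w) := by ring
  unfold Fmap mob
  simp only [Prod.mk.injEq]
  constructor
  · rw [hD, eq_comm, div_add_div _ _ hdz hdw]; congr 1; ring
  · rw [hD, div_mul_div_comm]; congr 1; ring

/-- Every Möbius automorphism `m` of `𝔻` induces a well-defined bijective self-map `τ(m)` of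
the symmetrised bidisc, `τ(m)(z+w, zw) = (m z + m w, m z · m w)`, and `m ↦ τ(m)` is an
injective group homomorphism from `Aut 𝔻` to the bijections of `G`. -/
theorem stmt_8 :
    -- well-definedness: the value depends only on (z+w, zw)
    (∀ m : ℂ → ℂ, IsMobius m → ∀ z w z' w' : ℂ, ‖z‖ < 1 → ‖w‖ < 1 → ‖z'‖ < 1 → ‖w'‖ < 1 →
      z + w = z' + w' → z * w = z' * w' →
      (m z + m w, m z * m w) = (m z' + m w', m z' * m w')) ∧
    -- τ(m) is a bijective self-map of G
    (∀ m : ℂ → ℂ, IsMobius m → ∃ F : ℂ × ℂ → ℂ × ℂ,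
      (∀ z w : ℂ, ‖z‖ < 1 → ‖w‖ < 1 → F (z + w, z * w) = (m z + m w, m z * m w)) ∧
      Set.BijOn F symBidisc symBidisc) ∧
    -- m ↦ τ(m) is a homomorphism: τ(m₁ ∘ m₂) agrees with τ(m₁) ∘ τ(m₂) on G
    (∀ (m₁ m₂ : ℂ → ℂ) (F₁ F₂ F₁₂ : ℂ × ℂ → ℂ × ℂ), IsMobius m₁ → IsMobius m₂ →
      (∀ z w : ℂ, ‖z‖ < 1 → ‖w‖ < 1 → F₁ (z + w, z * w) = (m₁ z + m₁ w, m₁ z * m₁ w)) →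
      (∀ z w : ℂ, ‖z‖ < 1 → ‖w‖ < 1 → F₂ (z + w, z * w) = (m₂ z + m₂ w, m₂ z * m₂ w)) →
      (∀ z w : ℂ, ‖z‖ < 1 → ‖w‖ < 1 →
        F₁₂ (z + w, z * w) = (m₁ (m₂ z) + m₁ (m₂ w), m₁ (m₂ z) * m₁ (m₂ w))) →
      ∀ x ∈ symBidisc, F₁₂ x = F₁ (F₂ x)) ∧
    -- injectivity: if τ(m) is the identity on G then m is the identity on 𝔻
    (∀ m : ℂ → ℂ, IsMobius m →
      (∀ z w : ℂ, ‖z‖ < 1 → ‖w‖ < 1 → (m z + m w, m z * m w) = (z + w, z * w)) →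
      ∀ l : ℂ, ‖l‖ < 1 → m l = l) := by
  refine ⟨?_, ?_, ?_, ?_⟩
  · -- well-definedness
    intro m _ z w z' w' hz hw hz' hw' h1 h2
    have key : (z - z') * (z - w') = 0 := by linear_combination z * h1 - h2
    rcases mul_eq_zero.1 key with h | h
    · have hzz : z = z' := by linear_combination h
      have hww : w = w' := by linear_combination h1 - h
      rw [hzz, hww]
    · have hzw : z = w' := by linear_combination h
      have hwz : w = z' := by linear_combination h1 - h
      rw [hzw, hwz, add_comm (m w') (m z'), mul_comm (m w') (m z')]
  · -- bijective self-map
    intro m ⟨ω, a, hω, ha, hm⟩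
    refine ⟨Fmap ω a, ?_, ?_⟩
    · intro z w hz hw
      have ez : mob ω a z = m z := (hm z hz).symm
      have ew : mob ω a w = m w := (hm w hw).symm
      rw [Fmap_eq ha hz hw, ez, ew]
    · have hω' := conj_omega_norm hω
      have ha' := neg_omega_a_norm hω ha
      have mapsF : Set.MapsTo (Fmap ω a) symBidisc symBidisc := by
        rintro x ⟨z, w, hz, hw, rfl⟩
        rw [Fmap_eq ha hz hw]
        exact ⟨mob ω a z, mob ω a w, mob_norm_lt hω ha hz, mob_norm_lt hω ha hw, rfl⟩
      have mapsG : Set.MapsTo (Fmap ((starRingEnd ℂ) ω) (-(ω * a))) symBidisc symBidisc := by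
        rintro x ⟨z, w, hz, hw, rfl⟩
        rw [Fmap_eq ha' hz hw]
        exact ⟨_, _, mob_norm_lt hω' ha' hz, mob_norm_lt hω' ha' hw, rfl⟩
      have hinv : Set.InvOn (Fmap ((starRingEnd ℂ) ω) (-(ω * a))) (Fmap ω a)
          symBidisc symBidisc := by
        constructor
        · rintro x ⟨z, w, hz, hw, rfl⟩
          rw [Fmap_eq ha hz hw,
            Fmap_eq ha' (mob_norm_lt hω ha hz) (mob_norm_lt hω ha hw),
            mob_inv hω ha hz, mob_inv hω ha hw]
        · rintro x ⟨z, w, hz, hw, rfl⟩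
          rw [Fmap_eq ha' hz hw,
            Fmap_eq ha (mob_norm_lt hω' ha' hz) (mob_norm_lt hω' ha' hw),
            mob_inv' hω ha hz, mob_inv' hω ha hw]
      exact hinv.bijOn mapsF mapsG
  · -- homomorphism
    rintro m₁ m₂ F₁ F₂ F₁₂ hM1 ⟨ω, a, hω, ha, hm⟩ h1 h2 h12 x ⟨z, w, hz, hw, rfl⟩
    have hmz : ‖m₂ z‖ < 1 := by rw [hm z hz]; exact mob_norm_lt hω ha hz
    have hmw : ‖m₂ w‖ < 1 := by rw [hm w hw]; exact mob_norm_lt hω ha hw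
    rw [h12 z w hz hw, h2 z w hz hw, h1 (m₂ z) (m₂ w) hmz hmw]
  · -- injectivity
    intro m _ h l hl
    have := h l l hl hl
    have h1 : m l + m l = l + l := congrArg Prod.fst this
    linear_combination h1 / 2
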